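/- (Every algebraic curve has a three-pole oval description) Let P ∈ ℝ[X,Y] be a real polynomial in two variables and let a, b, c ∈ ℂ be three points that are not collinear. Then there exists a real polynomial f ∈ ℝ[X,Y,Z] in three variables such that for every z ∈ ℂ, f(|z−a|², |z−b|², |z−c|²) = P(Re z, Im z). In particular, the algebraic curve {z ∈ ℂ : P(Re z, Im z) = 0} coincides with the oval {z ∈ ℂ : f(|z−a|², |z−b|², |z−c|²) = 0}. -/

import Mathlib

open Matrix Complex

lemma smul_vadd_re (r : ℝ) (v w : ℂ) : (r • v +ᵥ w).re = r * v.re + w.re := by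
  simp [Complex.real_smul]

lemma smul_vadd_im (r : ℝ) (v w : ℂ) : (r • v +ᵥ w).im = r * v.im + w.im := by
  simp [Complex.real_smul]

lemma det_ne_zero_of_not_collinear {a b c : ℂ}
    (h : ¬ Collinear ℝ ({a, b, c} : Set ℂ)) :
    (b - a).re * (c - a).im - (b - a).im * (c - a).re ≠ 0 := by
  intro hd
  apply h
  rw [collinear_iff_of_mem (Set.mem_insert a _)]
  simp only [Complex.sub_re, Complex.sub_im] at hd
  by_cases hba : b = a
  · refine ⟨c - a, ?_⟩
    intro p hp
    simp only [Set.mem_insert_iff, Set.mem_singleton_iff] at hp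
    rcases hp with hp | hp | hp
    · exact ⟨0, by rw [hp]; apply Complex.ext <;>
        simp [smul_vadd_re, smul_vadd_im]⟩
    · exact ⟨0, by rw [hp, hba]; apply Complex.ext <;>
        simp [smul_vadd_re, smul_vadd_im]⟩
    · exact ⟨1, by rw [hp]; apply Complex.ext <;>
        simp [smul_vadd_re, smul_vadd_im]⟩
  · refine ⟨b - a, ?_⟩
    have hv : (b - a).re ≠ 0 ∨ (b - a).im ≠ 0 := by
      by_contra hc
      push_neg at hc
      apply hba
      apply Complex.ext
      · have := hc.1; simp [Complex.sub_re, sub_eq_zero] at this; exact this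
      · have := hc.2; simp [Complex.sub_im, sub_eq_zero] at this; exact this
    intro p hp
    simp only [Set.mem_insert_iff, Set.mem_singleton_iff] at hp
    rcases hp with hp | hp | hp
    · exact ⟨0, by rw [hp]; apply Complex.ext <;>
        simp [smul_vadd_re, smul_vadd_im]⟩
    · exact ⟨1, by rw [hp]; apply Complex.ext <;>
        simp [smul_vadd_re, smul_vadd_im]⟩
    · rcases hv with hre | him
      · simp only [Complex.sub_re, Complex.sub_im] at hre
        refine ⟨(c.re - a.re) / (b.re - a.re), ?_⟩
        rw [hp]
        apply Complex.ext
        · rw [smul_vadd_re]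
          simp only [Complex.sub_re]
          field_simp
          ring
        · rw [smul_vadd_im]
          simp only [Complex.sub_im]
          field_simp
          nlinarith [hd]
      · simp only [Complex.sub_re, Complex.sub_im] at him
        refine ⟨(c.im - a.im) / (b.im - a.im), ?_⟩
        rw [hp]
        apply Complex.ext
        · rw [smul_vadd_re]
          simp only [Complex.sub_re]
          field_simp
          nlinarith [hd]
        · rw [smul_vadd_im]
          simp only [Complex.sub_im]
          field_simp
          ring

theorem algebraic_curve_three_pole_oval (P : MvPolynomial (Fin 2) ℝ) (a b c : ℂ)
    (h : ¬ Collinear ℝ ({a, b, c} : Set ℂ)) :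
    ∃ f : MvPolynomial (Fin 3) ℝ,
      (∀ z : ℂ,
        MvPolynomial.eval
            ![‖z - a‖ ^ 2, ‖z - b‖ ^ 2, ‖z - c‖ ^ 2] f =
          MvPolynomial.eval ![z.re, z.im] P) ∧
      {z : ℂ |
          MvPolynomial.eval
            ![‖z - a‖ ^ 2, ‖z - b‖ ^ 2, ‖z - c‖ ^ 2] f = 0} =
        {z : ℂ | MvPolynomial.eval ![z.re, z.im] P = 0} := by
  have hd : (b - a).re * (c - a).im - (b - a).im * (c - a).re ≠ 0 :=
    det_ne_zero_of_not_collinear h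
  have hd' : (b.re - a.re) * (c.im - a.im) - (b.im - a.im) * (c.re - a.re) ≠ 0 := by
    simpa [Complex.sub_re, Complex.sub_im] using hd
  set D : ℝ := (b.re - a.re) * (c.im - a.im) - (b.im - a.im) * (c.re - a.re) with hD
  set qx : MvPolynomial (Fin 3) ℝ :=
    MvPolynomial.C ((c.im - a.im) / (2 * D)) *
        (MvPolynomial.X 0 - MvPolynomial.X 1 -
          MvPolynomial.C (a.re ^ 2 + a.im ^ 2 - b.re ^ 2 - b.im ^ 2)) +
      MvPolynomial.C (-(b.im - a.im) / (2 * D)) *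
        (MvPolynomial.X 0 - MvPolynomial.X 2 -
          MvPolynomial.C (a.re ^ 2 + a.im ^ 2 - c.re ^ 2 - c.im ^ 2)) with hqx
  set qy : MvPolynomial (Fin 3) ℝ :=
    MvPolynomial.C (-(c.re - a.re) / (2 * D)) *
        (MvPolynomial.X 0 - MvPolynomial.X 1 -
          MvPolynomial.C (a.re ^ 2 + a.im ^ 2 - b.re ^ 2 - b.im ^ 2)) +
      MvPolynomial.C ((b.re - a.re) / (2 * D)) *
        (MvPolynomial.X 0 - MvPolynomial.X 2 -
          MvPolynomial.C (a.re ^ 2 + a.im ^ 2 - c.re ^ 2 - c.im ^ 2)) with hqy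
  have e : ∀ {n : ℕ} (v : Fin n → ℝ) (p : MvPolynomial (Fin n) ℝ),
      MvPolynomial.aeval v p = MvPolynomial.eval v p := fun v p =>
    RingHom.congr_fun (MvPolynomial.coe_aeval_eq_eval v) p
  have hall : ∀ z : ℂ,
      MvPolynomial.eval
          ![‖z - a‖ ^ 2, ‖z - b‖ ^ 2, ‖z - c‖ ^ 2]
          (MvPolynomial.bind₁ ![qx, qy] P) =
        MvPolynomial.eval ![z.re, z.im] P := by
    intro z
    set w : Fin 3 → ℝ :=
      ![‖z - a‖ ^ 2, ‖z - b‖ ^ 2, ‖z - c‖ ^ 2] with hw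
    have hA : ∀ p : ℂ, ‖z - p‖ ^ 2 =
        (z.re - p.re) ^ 2 + (z.im - p.im) ^ 2 := by
      intro p
      rw [Complex.sq_norm, Complex.normSq_apply]
      simp only [Complex.sub_re, Complex.sub_im]
      ring
    have hx : MvPolynomial.eval w qx = z.re := by
      simp only [hqx, map_add, _root_.map_mul, map_sub, MvPolynomial.eval_C,
        MvPolynomial.eval_X, hw, Matrix.cons_val_zero, Matrix.cons_val_one, Matrix.head_cons,
        Matrix.cons_val_two, Matrix.tail_cons]
      rw [hA a, hA b, hA c]
      field_simp
      rw [hD]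
      ring
    have hy : MvPolynomial.eval w qy = z.im := by
      simp only [hqy, map_add, _root_.map_mul, map_sub, MvPolynomial.eval_C,
        MvPolynomial.eval_X, hw, Matrix.cons_val_zero, Matrix.cons_val_one, Matrix.head_cons,
        Matrix.cons_val_two, Matrix.tail_cons]
      rw [hA a, hA b, hA c]
      field_simp
      rw [hD]
      ring
    have key : MvPolynomial.eval w (MvPolynomial.bind₁ ![qx, qy] P) =
        MvPolynomial.eval (fun i => MvPolynomial.eval w (![qx, qy] i)) P := by
      rw [← e w, MvPolynomial.aeval_bind₁]
      simp only [e]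
    have hfun : (fun i => MvPolynomial.eval w (![qx, qy] i)) = ![z.re, z.im] := by
      funext i
      fin_cases i
      · simpa using hx
      · simpa using hy
    rw [key, hfun]
  exact ⟨MvPolynomial.bind₁ ![qx, qy] P, hall, by ext z; simp [hall z]⟩
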